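/- If ℓ > 1/2, then there exists a constant C such that for all real a, ∫_ℝ dx / ((1+|x|)^{2ℓ} |a-x|^{1/2}) ≤ C / (1+|a|)^{1/2}. -/

import Mathlib

open MeasureTheory Set Real

/-- Integrability and value of the truncated singular kernel `|t|^{-1/2} 1_{|t| ≤ r}`. -/
lemma calc_est_2_aux (r : ℝ) (hr : 0 < r) :
    Integrable (fun t : ℝ =>
        Set.indicator (Set.Icc (0:ℝ) r) (fun s => s ^ (-(1:ℝ)/2)) |t|) volume ∧
    (∫ t : ℝ, Set.indicator (Set.Icc (0:ℝ) r) (fun s => s ^ (-(1:ℝ)/2)) |t|)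
      = 4 * r ^ ((1:ℝ)/2) := by
  set F : ℝ → ℝ := Set.indicator (Set.Icc (0:ℝ) r) (fun s => s ^ (-(1:ℝ)/2)) with hF
  have hIoc : IntegrableOn (fun s : ℝ => s ^ (-(1:ℝ)/2)) (Set.Ioc 0 r) volume := by
    have h := intervalIntegral.intervalIntegrable_rpow' (a := 0) (b := r)
      (r := -(1:ℝ)/2) (by norm_num)
    rw [intervalIntegrable_iff] at h
    rwa [Set.uIoc_of_le hr.le] at h
  have hIcc : IntegrableOn (fun s : ℝ => s ^ (-(1:ℝ)/2)) (Set.Icc 0 r) volume :=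
    (integrableOn_Icc_iff_integrableOn_Ioc).mpr hIoc
  have hFint : Integrable F volume := hIcc.integrable_indicator measurableSet_Icc
  have hF0 : F 0 = 0 := by
    rw [hF, Set.indicator_of_mem (Set.mem_Icc.mpr ⟨le_rfl, hr.le⟩)]
    rw [Real.zero_rpow (by norm_num)]
  have habs : (fun t : ℝ => F |t|) = fun t : ℝ => F t + F (-t) := by
    funext t
    rcases lt_trichotomy t 0 with ht | ht | ht
    · have h1 : F t = 0 := by
        rw [hF]; exact Set.indicator_of_notMem (fun hmem => absurd hmem.1 (not_le.mpr ht)) _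
      rw [abs_of_neg ht, h1, zero_add]
    · simp [ht, hF0]
    · have h1 : F (-t) = 0 := by
        rw [hF]
        exact Set.indicator_of_notMem
          (fun hmem => absurd hmem.1 (not_le.mpr (neg_lt_zero.mpr ht))) _
      rw [abs_of_pos ht, h1, add_zero]
  constructor
  · rw [habs]
    exact hFint.add hFint.comp_neg
  · rw [integral_comp_abs (f := F)]
    rw [hF]
    rw [MeasureTheory.setIntegral_indicator measurableSet_Icc]
    have hset : Set.Ioi (0:ℝ) ∩ Set.Icc 0 r = Set.Ioc 0 r := by
      ext x
      simp only [Set.mem_inter_iff, Set.mem_Ioi, Set.mem_Icc, Set.mem_Ioc]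
      constructor
      · rintro ⟨h1, _, h3⟩; exact ⟨h1, h3⟩
      · rintro ⟨h1, h2⟩; exact ⟨h1, h1.le, h2⟩
    rw [hset]
    have : (∫ x in Set.Ioc (0:ℝ) r, x ^ (-(1:ℝ)/2)) = ∫ x in (0:ℝ)..r, x ^ (-(1:ℝ)/2) := by
      rw [intervalIntegral.integral_of_le hr.le]
    rw [this, integral_rpow (Or.inl (by norm_num))]
    have h1 : -(1:ℝ)/2 + 1 = (1:ℝ)/2 := by norm_num
    rw [h1, Real.zero_rpow (by norm_num)]
    ring

theorem calc_est_2 (l : ℝ) (hl : 1/2 < l) :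
    ∃ C : ℝ, ∀ a : ℝ,
      (∫ x : ℝ, 1 / ((1 + |x|) ^ (2*l) * |a - x| ^ ((1:ℝ)/2))) ≤
        C / (1 + |a|) ^ ((1:ℝ)/2) := by
  have h2l : (1:ℝ) < 2*l := by linarith
  have hJ : Integrable (fun x : ℝ => (1 + |x|) ^ (-(2*l))) volume := by
    have h := integrable_one_add_norm (E := ℝ) (μ := volume) (r := 2*l)
      (by simpa using h2l)
    simpa [Real.norm_eq_abs] using h
  set J : ℝ := ∫ x : ℝ, (1 + |x|) ^ (-(2*l)) with hJdef
  refine ⟨4 * 2 ^ (2*l) / 2 ^ ((1:ℝ)/2) + 2 ^ ((1:ℝ)/2) * J, fun a => ?_⟩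
  set A : ℝ := 1 + |a| with hAdef
  have hA1 : (1:ℝ) ≤ A := by simp [hAdef, abs_nonneg]
  have hA : (0:ℝ) < A := lt_of_lt_of_le one_pos hA1
  set r : ℝ := A / 2 with hrdef
  have hr : 0 < r := by positivity
  obtain ⟨hHint, hHval⟩ := calc_est_2_aux r hr
  set F : ℝ → ℝ := Set.indicator (Set.Icc (0:ℝ) r) (fun s => s ^ (-(1:ℝ)/2)) with hFdef
  -- the two majorant pieces
  set g1 : ℝ → ℝ := fun x => (2/A) ^ (2*l) * F |a - x| with hg1def
  set g2 : ℝ → ℝ := fun x => 2 ^ ((1:ℝ)/2) * A ^ (-(1:ℝ)/2) * (1 + |x|) ^ (-(2*l))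
    with hg2def
  have hFnn : ∀ t : ℝ, 0 ≤ F t := fun t =>
    Set.indicator_nonneg (fun s hs => Real.rpow_nonneg hs.1 _) t
  have hg1int : Integrable g1 volume := by
    have : Integrable (fun x : ℝ => F |a - x|) volume :=
      Integrable.comp_sub_left (f := fun t : ℝ => F |t|) hHint a
    exact this.const_mul _
  have hg2int : Integrable g2 volume := by
    have := hJ.const_mul ((2:ℝ) ^ ((1:ℝ)/2) * A ^ (-(1:ℝ)/2))
    simpa [hg2def, mul_assoc] using this
  have hgint : Integrable (fun x => g1 x + g2 x) volume := hg1int.add hg2int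
  -- pointwise bound
  have hpt : ∀ x : ℝ,
      1 / ((1 + |x|) ^ (2*l) * |a - x| ^ ((1:ℝ)/2)) ≤ g1 x + g2 x := by
    intro x
    set u : ℝ := 1 + |x| with hudef
    set v : ℝ := |a - x| with hvdef
    have hu1 : (1:ℝ) ≤ u := by simp [hudef, abs_nonneg]
    have hu : (0:ℝ) < u := lt_of_lt_of_le one_pos hu1
    have hv0 : 0 ≤ v := abs_nonneg _
    have hg1nn : 0 ≤ g1 x := mul_nonneg (Real.rpow_nonneg (by positivity) _) (hFnn _)
    have hg2nn : 0 ≤ g2 x := by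
      apply mul_nonneg (mul_nonneg (Real.rpow_nonneg (by norm_num) _)
        (Real.rpow_nonneg hA.le _)) (Real.rpow_nonneg (by positivity) _)
    rcases eq_or_lt_of_le hv0 with hv | hv
    · -- v = 0 : LHS is 0
      rw [← hv, Real.zero_rpow (by norm_num), mul_zero, div_zero]
      exact add_nonneg hg1nn hg2nn
    rcases le_or_gt v r with hvr | hvr
    · -- near the singularity: bound by g1
      have hur : r ≤ u := by
        have h1 : |a| - |x| ≤ v := by
          rw [hvdef]; exact abs_sub_abs_le_abs_sub a x
        have : |a| - r ≤ |x| := by linarith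
        have : A - r ≤ u := by
          rw [hudef, hAdef] at *; linarith
        have hAr : A - r = r := by rw [hrdef]; ring
        linarith [hAr ▸ this]
      have hFval : F v = v ^ (-(1:ℝ)/2) := by
        rw [hFdef]; exact Set.indicator_of_mem (Set.mem_Icc.mpr ⟨hv0, hvr⟩) _
      have key : 1 / (u ^ (2*l) * v ^ ((1:ℝ)/2)) ≤ g1 x := by
        rw [hg1def]
        simp only [← hvdef]
        rw [hFval]
        have hrp : (0:ℝ) < r ^ (2*l) := Real.rpow_pos_of_pos hr _
        have hvp : (0:ℝ) < v ^ ((1:ℝ)/2) := Real.rpow_pos_of_pos hv _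
        have h2A : (2/A) = r⁻¹ := by rw [hrdef]; field_simp
        have hrw : (2/A) ^ (2*l) = (r ^ (2*l))⁻¹ := by
          rw [h2A, Real.inv_rpow hr.le]
        rw [hrw]
        have hneg : v ^ (-(1:ℝ)/2) = (v ^ ((1:ℝ)/2))⁻¹ := by
          rw [neg_div, Real.rpow_neg hv0]
        rw [hneg]
        rw [← mul_inv, ← one_div]
        apply one_div_le_one_div_of_le (by positivity)
        apply mul_le_mul_of_nonneg_right _ hvp.le
        exact Real.rpow_le_rpow hr.le hur (by linarith)
      calc 1 / (u ^ (2*l) * v ^ ((1:ℝ)/2)) ≤ g1 x := key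
        _ ≤ g1 x + g2 x := le_add_of_nonneg_right hg2nn
    · -- away from the singularity: bound by g2
      have hFval : F v = 0 := by
        rw [hFdef]
        exact Set.indicator_of_notMem (fun hmem => absurd hmem.2 (not_le.mpr hvr)) _
      have hg1z : g1 x = 0 := by rw [hg1def]; simp only [← hvdef, hFval, mul_zero]
      have key : 1 / (u ^ (2*l) * v ^ ((1:ℝ)/2)) ≤ g2 x := by
        rw [hg2def]
        have hup : (0:ℝ) < u ^ (2*l) := Real.rpow_pos_of_pos hu _
        have hvp : (0:ℝ) < v ^ ((1:ℝ)/2) := Real.rpow_pos_of_pos (hr.trans hvr) _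
        have hrp : (0:ℝ) < r ^ ((1:ℝ)/2) := Real.rpow_pos_of_pos hr _
        have h1 : 1 / (u ^ (2*l) * v ^ ((1:ℝ)/2))
            ≤ 1 / (u ^ (2*l) * r ^ ((1:ℝ)/2)) := by
          apply one_div_le_one_div_of_le (by positivity)
          exact mul_le_mul_of_nonneg_left
            (Real.rpow_le_rpow hr.le hvr.le (by norm_num)) hup.le
        have h2 : 1 / (u ^ (2*l) * r ^ ((1:ℝ)/2))
            = 2 ^ ((1:ℝ)/2) * A ^ (-(1:ℝ)/2) * u⁻¹ ^ (2*l) := by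
          rw [hrdef, Real.div_rpow hA.le (by norm_num : (0:ℝ) ≤ 2)]
          rw [neg_div, Real.rpow_neg hA.le, Real.inv_rpow hu.le]
          field_simp
        calc 1 / (u ^ (2*l) * v ^ ((1:ℝ)/2))
            ≤ 1 / (u ^ (2*l) * r ^ ((1:ℝ)/2)) := h1
          _ = 2 ^ ((1:ℝ)/2) * A ^ (-(1:ℝ)/2) * u⁻¹ ^ (2*l) := h2
          _ = 2 ^ ((1:ℝ)/2) * A ^ (-(1:ℝ)/2) * u ^ (-(2*l)) := by
              rw [Real.inv_rpow hu.le, ← Real.rpow_neg hu.le]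
      rw [hg1z, zero_add]
      exact key
  -- integral bound
  have hmono : (∫ x : ℝ, 1 / ((1 + |x|) ^ (2*l) * |a - x| ^ ((1:ℝ)/2)))
      ≤ ∫ x : ℝ, (g1 x + g2 x) := by
    apply integral_mono_of_nonneg
    · filter_upwards with x
      positivity
    · exact hgint
    · filter_upwards with x using hpt x
  have hint_g1 : (∫ x : ℝ, g1 x) = (2/A) ^ (2*l) * (4 * r ^ ((1:ℝ)/2)) := by
    rw [hg1def]
    rw [integral_const_mul]
    congr 1
    rw [integral_sub_left_eq_self (fun t : ℝ => F |t|) volume a]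
    exact hHval
  have hint_g2 : (∫ x : ℝ, g2 x) = 2 ^ ((1:ℝ)/2) * A ^ (-(1:ℝ)/2) * J := by
    rw [hg2def, integral_const_mul]
  have hsum : (∫ x : ℝ, (g1 x + g2 x))
      = (2/A) ^ (2*l) * (4 * r ^ ((1:ℝ)/2)) + 2 ^ ((1:ℝ)/2) * A ^ (-(1:ℝ)/2) * J := by
    rw [integral_add hg1int hg2int, hint_g1, hint_g2]
  -- estimate the first term
  have hterm1 : (2/A) ^ (2*l) * (4 * r ^ ((1:ℝ)/2))
      ≤ 4 * 2 ^ (2*l) / 2 ^ ((1:ℝ)/2) * A ^ (-(1:ℝ)/2) := by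
    have hA2 : (2/A) ^ (2*l) = 2 ^ (2*l) * A ^ (-(2*l)) := by
      rw [Real.div_rpow (by norm_num) hA.le, Real.rpow_neg hA.le, div_eq_mul_inv]
    have hr2 : r ^ ((1:ℝ)/2) = A ^ ((1:ℝ)/2) / 2 ^ ((1:ℝ)/2) := by
      rw [hrdef, Real.div_rpow hA.le (by norm_num)]
    rw [hA2, hr2]
    have hAe : A ^ (-(2*l)) * A ^ ((1:ℝ)/2) = A ^ (-(2*l) + (1:ℝ)/2) :=
      (Real.rpow_add hA _ _).symm
    have hcomb : 2 ^ (2*l) * A ^ (-(2*l)) * (4 * (A ^ ((1:ℝ)/2) / 2 ^ ((1:ℝ)/2)))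
        = 4 * 2 ^ (2*l) / 2 ^ ((1:ℝ)/2) * A ^ (-(2*l) + (1:ℝ)/2) := by
      rw [← hAe]; ring
    rw [hcomb]
    apply mul_le_mul_of_nonneg_left _ (by positivity)
    exact Real.rpow_le_rpow_of_exponent_le hA1 (by linarith)
  have hfin : (∫ x : ℝ, (g1 x + g2 x))
      ≤ (4 * 2 ^ (2*l) / 2 ^ ((1:ℝ)/2) + 2 ^ ((1:ℝ)/2) * J) * A ^ (-(1:ℝ)/2) := by
    rw [hsum]
    have : (4 * 2 ^ (2*l) / 2 ^ ((1:ℝ)/2) + 2 ^ ((1:ℝ)/2) * J) * A ^ (-(1:ℝ)/2)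
        = 4 * 2 ^ (2*l) / 2 ^ ((1:ℝ)/2) * A ^ (-(1:ℝ)/2)
          + 2 ^ ((1:ℝ)/2) * A ^ (-(1:ℝ)/2) * J := by ring
    rw [this]
    exact add_le_add_left hterm1 _
  have hdiv : (4 * 2 ^ (2*l) / 2 ^ ((1:ℝ)/2) + 2 ^ ((1:ℝ)/2) * J) * A ^ (-(1:ℝ)/2)
      = (4 * 2 ^ (2*l) / 2 ^ ((1:ℝ)/2) + 2 ^ ((1:ℝ)/2) * J) / A ^ ((1:ℝ)/2) := by
    rw [neg_div, Real.rpow_neg hA.le, div_eq_mul_inv]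
    ring
  calc (∫ x : ℝ, 1 / ((1 + |x|) ^ (2*l) * |a - x| ^ ((1:ℝ)/2)))
      ≤ ∫ x : ℝ, (g1 x + g2 x) := hmono
    _ ≤ (4 * 2 ^ (2*l) / 2 ^ ((1:ℝ)/2) + 2 ^ ((1:ℝ)/2) * J) * A ^ (-(1:ℝ)/2) := hfin
    _ = (4 * 2 ^ (2*l) / 2 ^ ((1:ℝ)/2) + 2 ^ ((1:ℝ)/2) * J) / A ^ ((1:ℝ)/2) := hdiv
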